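/- Copycat property: Let P be a round-based register protocol. If a concrete configuration γ_f is reachable from γ_i and the location (q,k) is in the support of γ_f, then for every N ∈ ℕ there exist concrete configurations γ_i' and γ_f' with γ_f' reachable from γ_i', such that |γ_i'| = |γ_i| + N, γ_i' has the same support and the same register values as γ_i, the location multiset of γ_f' equals that of γ_f plus N extra copies of (q,k), and γ_f' has the same register values as γ_f. -/

import Mathlib

open scoped Classical

/-- Actions of a round-based register protocol: round increment, read of value `x`
from register `α` of round `k - i`, and write of value `x` to register `α` of the
current round. -/
inductive Act (dim : ℕ) (D : Type) where
  | incr : Act dim D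
  | read (i : ℕ) (α : Fin dim) (x : D) : Act dim D
  | write (α : Fin dim) (x : D) : Act dim D

/-- A round-based register protocol. -/
structure Protocol (Q D : Type) (dim : ℕ) where
  q0 : Q
  d0 : D
  v : ℕ
  T : Set (Q × Act dim D × Q)
  read_le : ∀ q i α x q', (q, Act.read i α x, q') ∈ T → i ≤ v
  write_ne : ∀ q α x q', (q, Act.write α x, q') ∈ T → x ≠ d0

/-- A move: a transition together with the round on which it is performed. -/
abbrev Move (Q D : Type) (dim : ℕ) := (Q × Act dim D × Q) × ℕ

/-- A concrete configuration: a finitely supported multiset of locations and a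
valuation of all registers. -/
structure Conc (Q D : Type) (dim : ℕ) where
  loc : (Q × ℕ) →₀ ℕ
  reg : ℕ → Fin dim → D

variable {Q D : Type} {dim : ℕ}

/-- Value read from register `α` of round `k - i` (registers of negative rounds
hold the initial value). -/
def regVal (P : Protocol Q D dim) (γ : Conc Q D dim) (k i : ℕ) (α : Fin dim) : D :=
  if i ≤ k then γ.reg (k - i) α else P.d0

/-- Updating register `α` of round `k` to value `x`. -/
def updReg (r : ℕ → Fin dim → D) (k : ℕ) (α : Fin dim) (x : D) : ℕ → Fin dim → D :=
  fun k' α' => if k' = k ∧ α' = α then x else r k' α'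

/-- Concrete step relation of a round-based register protocol. -/
inductive ConcStep [DecidableEq Q] (P : Protocol Q D dim) :
    Conc Q D dim → Move Q D dim → Conc Q D dim → Prop where
  | incr {q q' : Q} {k : ℕ} {γ γ' : Conc Q D dim} :
      (q, Act.incr, q') ∈ P.T → 0 < γ.loc (q, k) →
      γ'.loc = γ.loc - Finsupp.single (q, k) 1 + Finsupp.single (q', k + 1) 1 →
      γ'.reg = γ.reg →
      ConcStep P γ ((q, Act.incr, q'), k) γ'
  | read {q q' : Q} {k i : ℕ} {α : Fin dim} {x : D} {γ γ' : Conc Q D dim} :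
      (q, Act.read i α x, q') ∈ P.T → 0 < γ.loc (q, k) →
      regVal P γ k i α = x →
      γ'.loc = γ.loc - Finsupp.single (q, k) 1 + Finsupp.single (q', k) 1 →
      γ'.reg = γ.reg →
      ConcStep P γ ((q, Act.read i α x, q'), k) γ'
  | write {q q' : Q} {k : ℕ} {α : Fin dim} {x : D} {γ γ' : Conc Q D dim} :
      (q, Act.write α x, q') ∈ P.T → 0 < γ.loc (q, k) →
      γ'.loc = γ.loc - Finsupp.single (q, k) 1 + Finsupp.single (q', k) 1 →
      γ'.reg = updReg γ.reg k α x →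
      ConcStep P γ ((q, Act.write α x, q'), k) γ'

/-- Concrete reachability. -/
def ConcReach [DecidableEq Q] (P : Protocol Q D dim) : Conc Q D dim → Conc Q D dim → Prop :=
  Relation.ReflTransGen (fun γ γ' => ∃ m, ConcStep P γ m γ')

/-- Initial concrete configuration with `n` processes. -/
noncomputable def Conc.init [DecidableEq Q] (P : Protocol Q D dim) (n : ℕ) : Conc Q D dim :=
  ⟨Finsupp.single (P.q0, 0) n, fun _ _ => P.d0⟩

/-- Number of processes of a concrete configuration. -/
def Conc.size (γ : Conc Q D dim) : ℕ := γ.loc.sum fun _ n => n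

/-- Support of the location multiset of a concrete configuration. -/
def Conc.supp (γ : Conc Q D dim) : Set (Q × ℕ) := {l | 0 < γ.loc l}

/-- The set of non-blank registers of a concrete configuration. -/
def Conc.nonBlank (P : Protocol Q D dim) (γ : Conc Q D dim) : Set (ℕ × Fin dim) :=
  {r | γ.reg r.1 r.2 ≠ P.d0}

/-- An abstract configuration: a set of locations and a set of written registers. -/
structure Abs (Q : Type) (dim : ℕ) where
  S : Set (Q × ℕ)
  W : Set (ℕ × Fin dim)

/-- Abstract step relation. -/
inductive AbsStep (P : Protocol Q D dim) :
    Abs Q dim → Move Q D dim → Abs Q dim → Prop where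
  | incr {σ : Abs Q dim} {q q' : Q} {k : ℕ} :
      (q, Act.incr, q') ∈ P.T → (q, k) ∈ σ.S →
      AbsStep P σ ((q, Act.incr, q'), k) ⟨σ.S ∪ {(q', k + 1)}, σ.W⟩
  | readBlank {σ : Abs Q dim} {q q' : Q} {k i : ℕ} {α : Fin dim} :
      (q, Act.read i α P.d0, q') ∈ P.T → (q, k) ∈ σ.S →
      (i ≤ k → (k - i, α) ∉ σ.W) →
      AbsStep P σ ((q, Act.read i α P.d0, q'), k) ⟨σ.S ∪ {(q', k)}, σ.W⟩
  | readVal {σ : Abs Q dim} {q q' q1 q2 : Q} {k i : ℕ} {α : Fin dim} {x : D} :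
      x ≠ P.d0 → (q, Act.read i α x, q') ∈ P.T → (q, k) ∈ σ.S →
      i ≤ k → (k - i, α) ∈ σ.W →
      (q1, Act.write α x, q2) ∈ P.T → (q1, k - i) ∈ σ.S → (q2, k - i) ∈ σ.S →
      AbsStep P σ ((q, Act.read i α x, q'), k) ⟨σ.S ∪ {(q', k)}, σ.W⟩
  | write {σ : Abs Q dim} {q q' : Q} {k : ℕ} {α : Fin dim} {x : D} :
      (q, Act.write α x, q') ∈ P.T → (q, k) ∈ σ.S →
      AbsStep P σ ((q, Act.write α x, q'), k) ⟨σ.S ∪ {(q', k)}, σ.W ∪ {(k, α)}⟩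

/-- Abstract reachability. -/
def AbsReach (P : Protocol Q D dim) : Abs Q dim → Abs Q dim → Prop :=
  Relation.ReflTransGen (fun σ σ' => ∃ m, AbsStep P σ m σ')

/-- The initial abstract configuration. -/
def Abs.init (P : Protocol Q D dim) : Abs Q dim := ⟨{(P.q0, 0)}, ∅⟩

/-- Abstract execution along a list of moves. -/
inductive AbsRun (P : Protocol Q D dim) : Abs Q dim → List (Move Q D dim) → Abs Q dim → Prop
  | nil (σ : Abs Q dim) : AbsRun P σ [] σ
  | cons {σ σ' σ'' : Abs Q dim} {m : Move Q D dim} {ms : List (Move Q D dim)} :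
      AbsStep P σ m σ' → AbsRun P σ' ms σ'' → AbsRun P σ (m :: ms) σ''

/-- First-write order of a schedule, given a set of already written registers. -/
noncomputable def fwo (W : Set (ℕ × Fin dim)) : List (Move Q D dim) → List (ℕ × Fin dim)
  | [] => []
  | ((_, Act.write α _, _), k) :: ms =>
      if (k, α) ∈ W then fwo W ms else (k, α) :: fwo (W ∪ {(k, α)}) ms
  | _ :: ms => fwo W ms

/-- Projection of a sequence of registers onto those whose round lies in `[k - v, k]`. -/
def winproj (v k : ℕ) (F : List (ℕ × Fin dim)) : List (ℕ × Fin dim) :=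
  F.filter (fun r => decide (k - v ≤ r.1 ∧ r.1 ≤ k))

section CopycatAux

variable [DecidableEq Q] {P : Protocol Q D dim}

/-- Adding a multiset of extra processes to a configuration. -/
noncomputable def addL (γ : Conc Q D dim) (c : (Q × ℕ) →₀ ℕ) : Conc Q D dim := ⟨γ.loc + c, γ.reg⟩

lemma loc_arith (a c : (Q × ℕ) →₀ ℕ) (s t : Q × ℕ) (h : 0 < a s) :
    a + c - Finsupp.single s 1 + Finsupp.single t 1
      = (a - Finsupp.single s 1 + Finsupp.single t 1) + c := by
  ext l
  have h' : s = l → 0 < a l := fun e => e ▸ h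
  simp only [Finsupp.add_apply, Finsupp.tsub_apply, Finsupp.single_apply]
  by_cases h1 : s = l
  · have := h' h1
    simp only [if_pos h1]
    split_ifs <;> omega
  · simp only [if_neg h1]
    split_ifs <;> omega

lemma updReg_idem (r : ℕ → Fin dim → D) (k : ℕ) (α : Fin dim) (x : D) :
    updReg (updReg r k α x) k α x = updReg r k α x := by
  funext k' α'
  simp only [updReg]
  split_ifs <;> rfl

lemma step_shift {γ γ₂ : Conc Q D dim} {m : Move Q D dim}
    (h : ConcStep P γ m γ₂) (c : (Q × ℕ) →₀ ℕ) :
    ConcStep P (addL γ c) m (addL γ₂ c) := by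
  cases h with
  | incr hT hpos hloc hreg =>
    refine ConcStep.incr hT ?_ ?_ hreg
    · show 0 < (γ.loc + c) _
      rw [Finsupp.add_apply]; omega
    · show γ₂.loc + c = (γ.loc + c) - _ + _
      rw [hloc, loc_arith _ _ _ _ hpos]
  | read hT hpos hval hloc hreg =>
    refine ConcStep.read hT ?_ hval ?_ hreg
    · show 0 < (γ.loc + c) _
      rw [Finsupp.add_apply]; omega
    · show γ₂.loc + c = (γ.loc + c) - _ + _
      rw [hloc, loc_arith _ _ _ _ hpos]
  | write hT hpos hloc hreg =>
    refine ConcStep.write hT ?_ ?_ hreg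
    · show 0 < (γ.loc + c) _
      rw [Finsupp.add_apply]; omega
    · show γ₂.loc + c = (γ.loc + c) - _ + _
      rw [hloc, loc_arith _ _ _ _ hpos]

/-- Repetition lemma: if from any configuration with the registers of `γ` and a
process at `s` one can move a process from `s` to `t`, then `n` extra processes
at `s` can all be moved to `t`. -/
lemma rep_aux (γ : Conc Q D dim) (s t : Q × ℕ)
    (hstep : ∀ c : (Q × ℕ) →₀ ℕ, 0 < (γ.loc + c) s →
      ∃ m, ConcStep P ⟨γ.loc + c, γ.reg⟩ m
        ⟨γ.loc + c - Finsupp.single s 1 + Finsupp.single t 1, γ.reg⟩) :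
    ∀ (n : ℕ) (c : (Q × ℕ) →₀ ℕ),
      ConcReach P ⟨γ.loc + (c + Finsupp.single s n), γ.reg⟩
        ⟨γ.loc + (c + Finsupp.single t n), γ.reg⟩ := by
  intro n
  induction n with
  | zero => intro c; simp only [Finsupp.single_zero, add_zero]; exact .refl
  | succ n ih =>
    intro c
    have h1 : 0 < (γ.loc + (c + Finsupp.single s (n + 1))) s := by
      simp [Finsupp.add_apply, Finsupp.single_apply]
    obtain ⟨m, hs⟩ := hstep (c + Finsupp.single s (n + 1)) h1
    have hre : (⟨γ.loc + (c + Finsupp.single s (n + 1)) - Finsupp.single s 1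
          + Finsupp.single t 1, γ.reg⟩ : Conc Q D dim)
        = ⟨γ.loc + ((c + Finsupp.single t 1) + Finsupp.single s n), γ.reg⟩ := by
      congr 1
      ext l
      simp only [Finsupp.add_apply, Finsupp.tsub_apply, Finsupp.single_apply]
      split_ifs <;> omega
    have s1 : ConcReach P ⟨γ.loc + (c + Finsupp.single s (n + 1)), γ.reg⟩
        ⟨γ.loc + ((c + Finsupp.single t 1) + Finsupp.single s n), γ.reg⟩ := by
      rw [← hre]; exact Relation.ReflTransGen.single ⟨m, hs⟩
    have s2 := ih (c + Finsupp.single t 1)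
    have hre2 : (⟨γ.loc + ((c + Finsupp.single t 1) + Finsupp.single t n), γ.reg⟩ : Conc Q D dim)
        = ⟨γ.loc + (c + Finsupp.single t (n + 1)), γ.reg⟩ := by
      congr 1
      ext l
      simp only [Finsupp.add_apply, Finsupp.single_apply]
      split_ifs <;> omega
    exact s1.trans (hre2 ▸ s2)

lemma copycat_key {γi γf : Conc Q D dim} (h : ConcReach P γi γf) :
    ∀ l, 0 < γf.loc l → ∀ N, ∃ l0, 0 < γi.loc l0 ∧
      ConcReach P ⟨γi.loc + Finsupp.single l0 N, γi.reg⟩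
        ⟨γf.loc + Finsupp.single l N, γf.reg⟩ := by
  induction h with
  | refl => intro l hl N; exact ⟨l, hl, .refl⟩
  | @tail γm γf h hstep ih =>
    intro l hl N
    obtain ⟨m, hs⟩ := hstep
    cases hs with
    | @incr q q' k _ _ hT hpos hloc hreg =>
      by_cases hcase : 0 < γm.loc l
      · obtain ⟨l0, h0, hr⟩ := ih l hcase N
        exact ⟨l0, h0, hr.tail ⟨_, step_shift (ConcStep.incr hT hpos hloc hreg)
          (Finsupp.single l N)⟩⟩
      · have hlt : l = (q', k + 1) := by
          by_contra hne
          rw [hloc, Finsupp.add_apply, Finsupp.tsub_apply] at hl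
          have h1 : Finsupp.single (q', k + 1) 1 l = 0 :=
            Finsupp.single_eq_of_ne' (fun e => hne e.symm)
          have hme : γm.loc l = 0 := Nat.eq_zero_of_not_pos hcase
          omega
        subst hlt
        obtain ⟨l0, h0, hr⟩ := ih (q, k) hpos N
        have st := step_shift (ConcStep.incr hT hpos hloc hreg) (Finsupp.single (q, k) N)
        have hrep := rep_aux (P := P) γf (q, k) (q', k + 1)
          (fun c hc => ⟨_, ConcStep.incr hT hc rfl rfl⟩) N 0
        simp only [zero_add] at hrep
        exact ⟨l0, h0, (hr.tail ⟨_, st⟩).trans hrep⟩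
    | @read q q' k i α x _ _ hT hpos hval hloc hreg =>
      by_cases hcase : 0 < γm.loc l
      · obtain ⟨l0, h0, hr⟩ := ih l hcase N
        exact ⟨l0, h0, hr.tail ⟨_, step_shift (ConcStep.read hT hpos hval hloc hreg)
          (Finsupp.single l N)⟩⟩
      · have hlt : l = (q', k) := by
          by_contra hne
          rw [hloc, Finsupp.add_apply, Finsupp.tsub_apply] at hl
          have h1 : Finsupp.single (q', k) 1 l = 0 :=
            Finsupp.single_eq_of_ne' (fun e => hne e.symm)
          have hme : γm.loc l = 0 := Nat.eq_zero_of_not_pos hcase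
          omega
        subst hlt
        obtain ⟨l0, h0, hr⟩ := ih (q, k) hpos N
        have st := step_shift (ConcStep.read hT hpos hval hloc hreg) (Finsupp.single (q, k) N)
        have hval' : ∀ c : (Q × ℕ) →₀ ℕ,
            regVal P (⟨γf.loc + c, γf.reg⟩ : Conc Q D dim) k i α = x := by
          intro c
          rw [← hval]
          simp only [regVal, hreg]
        have hrep := rep_aux (P := P) γf (q, k) (q', k)
          (fun c hc => ⟨_, ConcStep.read hT hc (hval' c) rfl rfl⟩) N 0
        simp only [zero_add] at hrep
        exact ⟨l0, h0, (hr.tail ⟨_, st⟩).trans hrep⟩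
    | @write q q' k α x _ _ hT hpos hloc hreg =>
      by_cases hcase : 0 < γm.loc l
      · obtain ⟨l0, h0, hr⟩ := ih l hcase N
        exact ⟨l0, h0, hr.tail ⟨_, step_shift (ConcStep.write hT hpos hloc hreg)
          (Finsupp.single l N)⟩⟩
      · have hlt : l = (q', k) := by
          by_contra hne
          rw [hloc, Finsupp.add_apply, Finsupp.tsub_apply] at hl
          have h1 : Finsupp.single (q', k) 1 l = 0 :=
            Finsupp.single_eq_of_ne' (fun e => hne e.symm)
          have hme : γm.loc l = 0 := Nat.eq_zero_of_not_pos hcase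
          omega
        subst hlt
        obtain ⟨l0, h0, hr⟩ := ih (q, k) hpos N
        have st := step_shift (ConcStep.write hT hpos hloc hreg) (Finsupp.single (q, k) N)
        have hregf : γf.reg = updReg γf.reg k α x := by
          rw [hreg, updReg_idem]
        have hrep := rep_aux (P := P) γf (q, k) (q', k)
          (fun c hc => ⟨_, ConcStep.write hT hc rfl hregf⟩) N 0
        simp only [zero_add] at hrep
        exact ⟨l0, h0, (hr.tail ⟨_, st⟩).trans hrep⟩

end CopycatAux

/-- Copycat property (Lemma 1). -/
theorem copycat_property {Q D : Type} {dim : ℕ} [DecidableEq Q]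
    (P : Protocol Q D dim) (q : Q) (k N : ℕ) (γi γf : Conc Q D dim)
    (hreach : ConcReach P γi γf) (hsupp : (q, k) ∈ γf.supp) :
    ∃ γi' γf' : Conc Q D dim,
      ConcReach P γi' γf' ∧
      γi'.size = γi.size + N ∧
      γi'.supp = γi.supp ∧
      γi'.reg = γi.reg ∧
      γf'.loc = γf.loc + Finsupp.single (q, k) N ∧
      γf'.reg = γf.reg := by
  obtain ⟨l0, h0, hr⟩ := copycat_key hreach (q, k) hsupp N
  refine ⟨⟨γi.loc + Finsupp.single l0 N, γi.reg⟩,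
    ⟨γf.loc + Finsupp.single (q, k) N, γf.reg⟩, hr, ?_, ?_, rfl, rfl, rfl⟩
  · show (γi.loc + Finsupp.single l0 N).sum (fun _ n => n) = γi.loc.sum (fun _ n => n) + N
    rw [Finsupp.sum_add_index' (fun _ => rfl) (fun _ _ _ => rfl),
      Finsupp.sum_single_index rfl]
  · ext l
    simp only [Conc.supp, Set.mem_setOf_eq, Finsupp.add_apply, Finsupp.single_apply]
    by_cases he : l0 = l
    · subst he
      simp only [if_pos rfl]
      omega
    · simp [he]
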